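/- Let E be a finite-dimensional real normed vector space, Ω ⊆ E a nonempty bounded open convex set, and d_Ω its Hilbert metric. Let c₁, c₂ : [0, ∞) → Ω be straight geodesics of speed 1 such that c₁(t) and c₂(t) converge, as t → ∞, to one and the same point ξ of the frontier of Ω. Then the function t ↦ d_Ω(c₁(t), c₂(t)) is non-increasing on [0, ∞). (Proposition 5.1(1), in the base-point form established in its proof: the Hilbert distance between two geodesics with the same forward endpoint is non-increasing.) -/

import Mathlib

open Filter

lemma chordal {E : Type*} [NormedAddCommGroup E] [NormedSpace ℝ E]
    (Ω : Set E) (hbd : Bornology.IsBounded Ω) (hop : IsOpen Ω) (hconv : Convex ℝ Ω)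
    {x : E} (hx : x ∈ Ω) {v : E} (hv : v ≠ 0) :
    ∃ η > (0:ℝ), x + η • v ∈ frontier Ω ∧
      (∀ r, 0 ≤ r → r < η → x + r • v ∈ Ω) ∧
      (∀ r, η < r → x + r • v ∉ closure Ω) ∧
      (∀ r, 0 ≤ r → x + r • v ∈ closure Ω → r ≤ η) ∧
      (∀ r, 0 < r → x + r • v ∈ frontier Ω → r = η) := by
  have hv' : (0:ℝ) < ‖v‖ := norm_pos_iff.mpr hv
  set S : Set ℝ := {r : ℝ | 0 ≤ r ∧ x + r • v ∈ closure Ω} with hS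
  have hS0 : (0:ℝ) ∈ S := ⟨le_refl 0, by simpa using subset_closure hx⟩
  have hSne : S.Nonempty := ⟨0, hS0⟩
  -- bounded above
  obtain ⟨C, hC⟩ := (hbd.closure).exists_norm_le
  have hbdd : BddAbove S := by
    refine ⟨(C + ‖x‖) / ‖v‖, fun r hr => ?_⟩
    have h1 : ‖x + r • v‖ ≤ C := hC _ hr.2
    have h2 : ‖r • v‖ ≤ C + ‖x‖ := by
      have heq : r • v = (x + r • v) - x := by module
      rw [heq]
      calc ‖(x + r • v) - x‖ ≤ ‖x + r • v‖ + ‖x‖ := norm_sub_le _ _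
        _ ≤ C + ‖x‖ := by linarith
    rw [norm_smul, Real.norm_eq_abs, abs_of_nonneg hr.1] at h2
    rw [le_div_iff₀ hv']
    exact h2
  -- S is closed
  have hSclosed : IsClosed S := by
    have : S = Set.Ici (0:ℝ) ∩ (fun r : ℝ => x + r • v) ⁻¹' closure Ω := by
      ext r; simp [hS, Set.mem_Ici, and_comm]
    rw [this]
    exact isClosed_Ici.inter (isClosed_closure.preimage (by continuity))
  set η := sSup S with hη
  have hηS : η ∈ S := hSclosed.csSup_mem hSne hbdd
  -- η > 0
  obtain ⟨ε, hε, hball⟩ := Metric.isOpen_iff.mp hop x hx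
  have hηpos : 0 < η := by
    have hmem : ε / (2 * ‖v‖) ∈ S := by
      refine ⟨by positivity, subset_closure (hball ?_)⟩
      rw [Metric.mem_ball, dist_eq_norm]
      simp only [add_sub_cancel_left]
      rw [norm_smul, Real.norm_eq_abs, abs_of_nonneg (by positivity : (0:ℝ) ≤ ε / (2 * ‖v‖))]
      rw [div_mul_eq_mul_div, mul_comm]
      rw [mul_div_assoc]
      calc ‖v‖ * (ε / (2 * ‖v‖) ) = ε/2 := by field_simp
        _ < ε := by linarith
    calc (0:ℝ) < ε / (2 * ‖v‖) := by positivity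
      _ ≤ η := le_csSup hbdd hmem
  -- interior points
  have hint : ∀ r, 0 ≤ r → r < η → x + r • v ∈ Ω := by
    intro r hr0 hrη
    obtain ⟨r', hr'S, hrr'⟩ := exists_lt_of_lt_csSup hSne hrη
    have hr'pos : 0 < r' := lt_of_le_of_lt hr0 hrr'
    have hcombo : x + r • v = (1 - r / r') • x + (r / r') • (x + r' • v) := by
      have : r / r' * r' = r := div_mul_cancel₀ r (ne_of_gt hr'pos)
      rw [smul_add, smul_smul, this]
      module
    rw [hcombo]
    have h1 : 0 < 1 - r / r' := by
      have : r / r' < 1 := (div_lt_one hr'pos).mpr hrr'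
      linarith
    have h2 : (0:ℝ) ≤ r / r' := by positivity
    have h3 : (1 - r / r') + r / r' = 1 := by ring
    have := hconv.combo_interior_closure_mem_interior (a := 1 - r / r') (b := r / r')
      (hop.interior_eq.symm ▸ hx) hr'S.2 h1 h2 h3
    rwa [hop.interior_eq] at this
  -- upper bound clause
  have hub : ∀ r, 0 ≤ r → x + r • v ∈ closure Ω → r ≤ η := fun r h1 h2 =>
    le_csSup hbdd ⟨h1, h2⟩
  -- beyond: not in closure
  have hout : ∀ r, η < r → x + r • v ∉ closure Ω := by
    intro r hr hmem
    exact absurd (hub r (le_of_lt (lt_trans hηpos hr)) hmem) (not_le.mpr hr)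
  -- frontier
  have hfr : x + η • v ∈ frontier Ω := by
    rw [hop.frontier_eq]
    refine ⟨hηS.2, fun hmem => ?_⟩
    obtain ⟨ε', hε', hball'⟩ := Metric.isOpen_iff.mp hop _ hmem
    have : η + ε' / (2 * ‖v‖) ∈ S := by
      refine ⟨by positivity, subset_closure (hball' ?_)⟩
      rw [Metric.mem_ball, dist_eq_norm]
      have : x + (η + ε' / (2 * ‖v‖)) • v - (x + η • v) = (ε' / (2 * ‖v‖)) • v := by module
      rw [this, norm_smul, Real.norm_eq_abs,
        abs_of_nonneg (by positivity : (0:ℝ) ≤ ε' / (2 * ‖v‖))]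
      calc ε' / (2 * ‖v‖) * ‖v‖ = ε'/2 := by field_simp
        _ < ε' := by linarith
    have := le_csSup hbdd this
    have hpos : 0 < ε' / (2 * ‖v‖) := by positivity
    linarith
  -- uniqueness
  have huniq : ∀ r, 0 < r → x + r • v ∈ frontier Ω → r = η := by
    intro r hr hrfr
    rcases lt_trichotomy r η with h | h | h
    · exact absurd (hint r (le_of_lt hr) h) ((hop.frontier_eq ▸ hrfr).2)
    · exact h
    · exact absurd (frontier_subset_closure hrfr) (hout r h)
  exact ⟨η, hηpos, hfr, hint, hout, hub, huniq⟩

section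
variable {E : Type*} [NormedAddCommGroup E] [NormedSpace ℝ E]
variable (Ω : Set E) (d : E → E → ℝ)

/-- The Hilbert distance formula in chord-parameter form. -/
lemma hform
    (hd : ∀ x ∈ Ω, ∀ y ∈ Ω, x ≠ y → ∀ a ∈ frontier Ω, ∀ b ∈ frontier Ω,
      (∃ s > (0 : ℝ), a = x + s • (x - y)) → (∃ t > (0 : ℝ), b = y + t • (y - x)) →
      d x y = (1 / 2) * Real.log ((‖y - a‖ * ‖x - b‖) / (‖x - a‖ * ‖y - b‖)))
    {x y : E} (hx : x ∈ Ω) (hy : y ∈ Ω) (hxy : x ≠ y) {A B : ℝ} (hA : 0 < A) (hB : 0 < B)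
    (ha : x + A • (x - y) ∈ frontier Ω) (hb : y + B • (y - x) ∈ frontier Ω) :
    d x y = (1 / 2) * Real.log (((1 + A) * (1 + B)) / (A * B)) := by
  have h := hd x hx y hy hxy _ ha _ hb ⟨A, hA, rfl⟩ ⟨B, hB, rfl⟩
  rw [h]
  congr 1
  have e1 : y - (x + A • (x - y)) = (1 + A) • (y - x) := by module
  have e2 : x - (y + B • (y - x)) = (1 + B) • (x - y) := by module
  have e3 : x - (x + A • (x - y)) = A • (y - x) := by module
  have e4 : y - (y + B • (y - x)) = B • (x - y) := by module
  rw [e1, e2, e3, e4, norm_smul, norm_smul, norm_smul, norm_smul]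
  have hxy' : (0:ℝ) < ‖x - y‖ := by
    rw [norm_pos_iff, sub_ne_zero]; exact hxy
  have hyx' : ‖y - x‖ = ‖x - y‖ := norm_sub_rev _ _
  rw [hyx', Real.norm_eq_abs, Real.norm_eq_abs, Real.norm_eq_abs, Real.norm_eq_abs,
    abs_of_pos hA, abs_of_pos hB, abs_of_pos (by linarith : (0:ℝ) < 1 + A),
    abs_of_pos (by linarith : (0:ℝ) < 1 + B)]
  congr 1
  rw [div_eq_div_iff (by positivity) (by positivity)]
  ring

lemma hnonneg
    (hd0 : ∀ x ∈ Ω, d x x = 0)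
    (hd : ∀ x ∈ Ω, ∀ y ∈ Ω, x ≠ y → ∀ a ∈ frontier Ω, ∀ b ∈ frontier Ω,
      (∃ s > (0 : ℝ), a = x + s • (x - y)) → (∃ t > (0 : ℝ), b = y + t • (y - x)) →
      d x y = (1 / 2) * Real.log ((‖y - a‖ * ‖x - b‖) / (‖x - a‖ * ‖y - b‖)))
    (hbd : Bornology.IsBounded Ω) (hop : IsOpen Ω) (hconv : Convex ℝ Ω)
    {x y : E} (hx : x ∈ Ω) (hy : y ∈ Ω) : 0 ≤ d x y := by
  rcases eq_or_ne x y with rfl | hxy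
  · rw [hd0 x hx]
  · obtain ⟨A, hA, ha, -, -, -, -⟩ := chordal Ω hbd hop hconv hx
      (sub_ne_zero.mpr hxy : x - y ≠ 0)
    obtain ⟨B, hB, hb, -, -, -, -⟩ := chordal Ω hbd hop hconv hy
      (sub_ne_zero.mpr hxy.symm : y - x ≠ 0)
    rw [hform Ω d hd hx hy hxy hA hB ha hb]
    have h1 : (1:ℝ) ≤ ((1 + A) * (1 + B)) / (A * B) := by
      rw [le_div_iff₀ (by positivity)]
      nlinarith
    have := Real.log_nonneg h1
    linarith
end

lemma ratio_mono {u0 u : ℝ} (h0 : 0 < u0) (h : u0 ≤ u) : (1+u)/u ≤ (1+u0)/u0 := by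
  rw [div_le_div_iff₀ (by linarith) h0]; nlinarith

lemma scal1 {la mu sg ta K A : ℝ} (hla1 : la < 1) (hmu1 : mu < 1)
    (hsg : 0 < sg) (hta : 0 < ta) (hK : 1 < K)
    (h1 : la + sg = K * (sg * (1 - la))) (h2 : mu + ta = K * (ta * (1 - mu)))
    (hA : 0 < A) (hC1 : A * ta ≤ sg * (1 + ta + A)) :
    0 ≤ A * (la - mu) + la * (1 - mu) := by
  have hKs : (0:ℝ) < 1 + K * sg := by nlinarith
  have hKt : (0:ℝ) < 1 + K * ta := by nlinarith
  have hla : la = sg * (K - 1) / (1 + K * sg) := by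
    field_simp
    linear_combination (1:ℝ) * h1
  have hmu : mu = ta * (K - 1) / (1 + K * ta) := by
    field_simp
    linear_combination (1:ℝ) * h2
  have key : A * (la - mu) + la * (1 - mu)
      = (K - 1) * (sg * (1 + ta + A) - A * ta) / ((1 + K * sg) * (1 + K * ta)) := by
    rw [hla, hmu]
    field_simp
    ring
  rw [key]
  apply div_nonneg _ (by positivity)
  apply mul_nonneg (by linarith) (by linarith)

section
variable {E : Type*} [NormedAddCommGroup E] [NormedSpace ℝ E]

set_option maxHeartbeats 1600000 in
/-- Core lemma: moving equal Hilbert distance toward a common boundary point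
does not increase the Hilbert distance. -/
lemma core (Ω : Set E) (hbd : Bornology.IsBounded Ω) (hop : IsOpen Ω) (hconv : Convex ℝ Ω)
    (d : E → E → ℝ)
    (hd0 : ∀ x ∈ Ω, d x x = 0)
    (hd : ∀ x ∈ Ω, ∀ y ∈ Ω, x ≠ y → ∀ a ∈ frontier Ω, ∀ b ∈ frontier Ω,
      (∃ s > (0 : ℝ), a = x + s • (x - y)) → (∃ t > (0 : ℝ), b = y + t • (y - x)) →
      d x y = (1 / 2) * Real.log ((‖y - a‖ * ‖x - b‖) / (‖x - a‖ * ‖y - b‖)))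
    {x y ξ : E} (hx : x ∈ Ω) (hy : y ∈ Ω) (hξ : ξ ∈ frontier Ω)
    {la mu sg ta K : ℝ}
    (hla0 : 0 < la) (hla1 : la < 1) (hmu0 : 0 < mu) (hmu1 : mu < 1)
    (hsg : 0 < sg) (hta : 0 < ta) (hK : 1 < K)
    (ha1 : x + sg • (x - ξ) ∈ frontier Ω) (ha2 : y + ta • (y - ξ) ∈ frontier Ω)
    (hrel1 : la + sg = K * (sg * (1 - la))) (hrel2 : mu + ta = K * (ta * (1 - mu))) :
    d (x + la • (ξ - x)) (y + mu • (ξ - y)) ≤ d x y := by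
  have hξΩ : ξ ∉ Ω := by rw [hop.frontier_eq] at hξ; exact hξ.2
  have hxξ : x - ξ ≠ 0 := fun h => hξΩ (by rw [sub_eq_zero] at h; exact h ▸ hx)
  have hyξ : y - ξ ≠ 0 := fun h => hξΩ (by rw [sub_eq_zero] at h; exact h ▸ hy)
  -- the moved points are interior
  have hx' : x + la • (ξ - x) ∈ Ω := by
    have hcomb : x + la • (ξ - x) = (1 - la) • x + la • ξ := by module
    rw [hcomb]
    have := hconv.combo_interior_closure_mem_interior (a := 1 - la) (b := la)
      (hop.interior_eq.symm ▸ hx) (frontier_subset_closure hξ)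
      (by linarith) (le_of_lt hla0) (by ring)
    rwa [hop.interior_eq] at this
  have hy' : y + mu • (ξ - y) ∈ Ω := by
    have hcomb : y + mu • (ξ - y) = (1 - mu) • y + mu • ξ := by module
    rw [hcomb]
    have := hconv.combo_interior_closure_mem_interior (a := 1 - mu) (b := mu)
      (hop.interior_eq.symm ▸ hy) (frontier_subset_closure hξ)
      (by linarith) (le_of_lt hmu0) (by ring)
    rwa [hop.interior_eq] at this
  -- chord data for the two rays toward ξ (backward)
  obtain ⟨η1, hη1pos, hη1f, hint1, hout1, hub1, huniq1⟩ := chordal Ω hbd hop hconv hx hxξ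
  obtain ⟨η2, hη2pos, hη2f, hint2, hout2, hub2, huniq2⟩ := chordal Ω hbd hop hconv hy hyξ
  have hsgeq : sg = η1 := huniq1 sg hsg ha1
  have htaeq : ta = η2 := huniq2 ta hta ha2
  by_cases hxy : x = y
  · -- same base point: the moved points coincide
    subst hxy
    have h12 : η1 = η2 := by
      have h1 : x - ξ = x - ξ := rfl
      exact (huniq1 η2 hη2pos (by exact hη2f)).symm
    have hst : sg = ta := by rw [hsgeq, htaeq, h12]
    have hlm : la = mu := by
      subst hst
      have hfac : (la - mu) * (1 + K * sg) = 0 := by linear_combination hrel1 - hrel2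
      have hpos : (0:ℝ) < 1 + K * sg := by nlinarith
      rcases mul_eq_zero.mp hfac with h | h
      · linarith
      · linarith
    rw [hlm]
    rw [hd0 _ hy', hd0 _ hx]
  · -- main case
    have hxmy : x - y ≠ 0 := sub_ne_zero.mpr hxy
    have hymx : y - x ≠ 0 := sub_ne_zero.mpr (Ne.symm hxy)
    obtain ⟨A, hApos, haf, _, _, _, _⟩ := chordal Ω hbd hop hconv hx hxmy
    obtain ⟨B, hBpos, hbf, _, _, _, _⟩ := chordal Ω hbd hop hconv hy hymx
    have hdxy : d x y = (1/2) * Real.log (((1+A)*(1+B))/(A*B)) :=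
      hform Ω d hd hx hy hxy hApos hBpos haf hbf
    have hABlog : (0:ℝ) ≤ Real.log (((1+A)*(1+B))/(A*B)) := by
      apply Real.log_nonneg
      rw [le_div_iff₀ (by positivity)]
      nlinarith
    -- convexity constraints C1, C2
    have h1tA : (0:ℝ) < 1 + ta + A := by linarith
    have h1sB : (0:ℝ) < 1 + sg + B := by linarith
    have h1tA' : (1:ℝ) + ta + A ≠ 0 := ne_of_gt h1tA
    have h1sB' : (1:ℝ) + sg + B ≠ 0 := ne_of_gt h1sB
    have hC1 : A * ta ≤ sg * (1 + ta + A) := by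
      have hcomb : x + (A * ta / (1 + ta + A)) • (x - ξ)
          = (1 - A / (1 + ta + A)) • (x + A • (x - y)) + (A / (1 + ta + A)) • (y + ta • (y - ξ)) := by
        match_scalars <;> field_simp <;> try ring
      have hPmem : x + (A * ta / (1 + ta + A)) • (x - ξ) ∈ closure Ω := by
        rw [hcomb]
        exact hconv.closure (frontier_subset_closure haf) (frontier_subset_closure ha2)
          (by rw [sub_nonneg, div_le_one h1tA]; linarith)
          (div_nonneg hApos.le h1tA.le) (by ring)
      have := hub1 _ (div_nonneg (mul_nonneg hApos.le hta.le) h1tA.le) hPmem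
      rw [← hsgeq] at this
      calc A * ta = (A * ta / (1 + ta + A)) * (1 + ta + A) := by field_simp
        _ ≤ sg * (1 + ta + A) := by
            apply mul_le_mul_of_nonneg_right this (le_of_lt h1tA)
    have hC2 : B * sg ≤ ta * (1 + sg + B) := by
      have hcomb : y + (B * sg / (1 + sg + B)) • (y - ξ)
          = (1 - B / (1 + sg + B)) • (y + B • (y - x)) + (B / (1 + sg + B)) • (x + sg • (x - ξ)) := by
        match_scalars <;> field_simp <;> try ring
      have hPmem : y + (B * sg / (1 + sg + B)) • (y - ξ) ∈ closure Ω := by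
        rw [hcomb]
        exact hconv.closure (frontier_subset_closure hbf) (frontier_subset_closure ha1)
          (by rw [sub_nonneg, div_le_one h1sB]; linarith)
          (div_nonneg hBpos.le h1sB.le) (by ring)
      have := hub2 _ (div_nonneg (mul_nonneg hBpos.le hsg.le) h1sB.le) hPmem
      rw [← htaeq] at this
      calc B * sg = (B * sg / (1 + sg + B)) * (1 + sg + B) := by field_simp
        _ ≤ ta * (1 + sg + B) := by
            apply mul_le_mul_of_nonneg_right this (le_of_lt h1sB)
    -- scalar facts
    have hE1 : 0 ≤ A * (la - mu) + la * (1 - mu) :=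
      scal1 hla1 hmu1 hsg hta hK hrel1 hrel2 hApos hC1
    have hE2 : 0 ≤ B * (mu - la) + mu * (1 - la) :=
      scal1 hmu1 hla1 hta hsg hK hrel2 hrel1 hBpos hC2
    have hDa : (0:ℝ) < A * (la - mu) + (1 - mu) := by nlinarith
    have hDb : (0:ℝ) < B * (mu - la) + (1 - la) := by nlinarith
    have hDa' : A * (la - mu) + (1 - mu) ≠ 0 := ne_of_gt hDa
    have hDb' : B * (mu - la) + (1 - la) ≠ 0 := ne_of_gt hDb
    have hla1' : (1:ℝ) - la ≠ 0 := by linarith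
    have hmu1' : (1:ℝ) - mu ≠ 0 := by linarith
    by_cases hx'y' : x + la • (ξ - x) = y + mu • (ξ - y)
    · rw [hx'y', hd0 _ hy', hdxy]
      linarith
    · obtain ⟨al, halpos, haf', _, _, hubα, _⟩ := chordal Ω hbd hop hconv hx'
        (sub_ne_zero.mpr hx'y')
      obtain ⟨be, hbepos, hbf', _, _, hubβ, _⟩ := chordal Ω hbd hop hconv hy'
        (sub_ne_zero.mpr (Ne.symm hx'y'))
      have hdx'y' : d (x + la • (ξ - x)) (y + mu • (ξ - y))
          = (1/2) * Real.log (((1+al)*(1+be))/(al*be)) :=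
        hform Ω d hd hx' hy' hx'y' halpos hbepos haf' hbf'
      -- the comparison points on the boundary segments
      have hα₀ : (1 - la) * A / (A * (la - mu) + (1 - mu)) ≤ al := by
        apply hubα _ (div_nonneg (mul_nonneg (by linarith) hApos.le) hDa.le)
        have hcomb : (x + la • (ξ - x)) + ((1 - la) * A / (A * (la - mu) + (1 - mu))) •
              ((x + la • (ξ - x)) - (y + mu • (ξ - y)))
            = (1 - (1 - la) * (1 - mu) / (A * (la - mu) + (1 - mu))) • ξ
              + ((1 - la) * (1 - mu) / (A * (la - mu) + (1 - mu))) • (x + A • (x - y)) := by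
          match_scalars <;> field_simp <;> try ring
        rw [hcomb]
        refine hconv.closure (frontier_subset_closure hξ) (frontier_subset_closure haf)
          ?_ (div_nonneg (mul_nonneg (by linarith) (by linarith)) hDa.le) (by ring)
        rw [sub_nonneg, div_le_one hDa]
        have hkey : A * (la - mu) + (1 - mu) - (1 - la) * (1 - mu)
            = A * (la - mu) + la * (1 - mu) := by ring
        linarith [hE1, hkey]
      have hβ₀ : (1 - mu) * B / (B * (mu - la) + (1 - la)) ≤ be := by
        apply hubβ _ (div_nonneg (mul_nonneg (by linarith) hBpos.le) hDb.le)
        have hcomb : (y + mu • (ξ - y)) + ((1 - mu) * B / (B * (mu - la) + (1 - la))) •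
              ((y + mu • (ξ - y)) - (x + la • (ξ - x)))
            = (1 - (1 - mu) * (1 - la) / (B * (mu - la) + (1 - la))) • ξ
              + ((1 - mu) * (1 - la) / (B * (mu - la) + (1 - la))) • (y + B • (y - x)) := by
          match_scalars <;> field_simp <;> try ring
        rw [hcomb]
        refine hconv.closure (frontier_subset_closure hξ) (frontier_subset_closure hbf)
          ?_ (div_nonneg (mul_nonneg (by linarith) (by linarith)) hDb.le) (by ring)
        rw [sub_nonneg, div_le_one hDb]
        have hkey : B * (mu - la) + (1 - la) - (1 - mu) * (1 - la)
            = B * (mu - la) + mu * (1 - la) := by ring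
        linarith [hE2, hkey]
      -- final comparison
      rw [hdx'y', hdxy]
      have hargpos : (0:ℝ) < ((1+al)*(1+be))/(al*be) :=
        div_pos (mul_pos (by linarith) (by linarith)) (mul_pos halpos hbepos)
      have hα₀pos : (0:ℝ) < (1 - la) * A / (A * (la - mu) + (1 - mu)) :=
        div_pos (mul_pos (by linarith) hApos) hDa
      have hβ₀pos : (0:ℝ) < (1 - mu) * B / (B * (mu - la) + (1 - la)) :=
        div_pos (mul_pos (by linarith) hBpos) hDb
      have hchain : ((1+al)*(1+be))/(al*be) ≤ ((1+A)*(1+B))/(A*B) := by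
        have e1 : ((1+al)*(1+be))/(al*be) = ((1+al)/al)*((1+be)/be) := by
          rw [div_mul_div_comm]
        have e2 : ((1+A)*(1+B))/(A*B)
            = ((1 + (1 - la) * A / (A * (la - mu) + (1 - mu))) / ((1 - la) * A / (A * (la - mu) + (1 - mu))))
              * ((1 + (1 - mu) * B / (B * (mu - la) + (1 - la))) / ((1 - mu) * B / (B * (mu - la) + (1 - la)))) := by
          field_simp
          ring
        rw [e1, e2]
        apply mul_le_mul (ratio_mono hα₀pos hα₀) (ratio_mono hβ₀pos hβ₀)
          (le_of_lt (div_pos (by linarith) hbepos)) (le_of_lt (div_pos (by linarith) hα₀pos))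
      calc (1:ℝ)/2 * Real.log (((1+al)*(1+be))/(al*be))
          ≤ 1/2 * Real.log (((1+A)*(1+B))/(A*B)) := by
            have hlog := Real.log_le_log hargpos hchain
            linarith
        _ = 1/2 * Real.log (((1+A)*(1+B))/(A*B)) := rfl
end

lemma ray_isom {g : ℝ → ℝ} (h : ∀ u ≥ (0:ℝ), ∀ v ≥ (0:ℝ), |g u - g v| = |u - v|) :
    (∀ u ≥ (0:ℝ), g u = g 0 + u) ∨ (∀ u ≥ (0:ℝ), g u = g 0 - u) := by
  have h10 : |g 1 - g 0| = 1 := by simpa using h 1 (by norm_num) 0 le_rfl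
  have habs : g 1 - g 0 = 1 ∨ g 1 - g 0 = -1 := (abs_eq (by norm_num)).mp h10
  have main : ∀ e : ℝ, g 1 - g 0 = e → (e = 1 ∨ e = -1) →
      ∀ u ≥ (0:ℝ), g u = g 0 + e * u := by
    intro e he hee u hu
    have hu0 : |g u - g 0| = u := by simpa [abs_of_nonneg hu] using h u hu 0 le_rfl
    rcases (abs_eq hu).mp hu0 with h' | h'
    · -- g u - g 0 = u
      rcases hee with rfl | rfl
      · linarith
      · -- e = -1 : need g u = g 0 - u;  use |g u - g 1| = |u - 1|
        have hu1 : |g u - g 1| = |u - 1| := h u hu 1 (by norm_num)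
        have hgu1 : g u - g 1 = u + 1 := by linarith
        rw [hgu1, abs_of_nonneg (by linarith : (0:ℝ) ≤ u + 1)] at hu1
        rcases abs_cases (u - 1) with ⟨h2, _⟩ | ⟨h2, _⟩
        · rw [h2] at hu1; linarith
        · rw [h2] at hu1
          have : u = 0 := by linarith
          rw [this] at h' ⊢
          linarith
    · -- g u - g 0 = -u
      rcases hee with rfl | rfl
      · have hu1 : |g u - g 1| = |u - 1| := h u hu 1 (by norm_num)
        have hgu1 : g u - g 1 = -u - 1 := by linarith
        rw [hgu1, abs_of_nonpos (by linarith : -u - 1 ≤ (0:ℝ))] at hu1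
        rcases abs_cases (u - 1) with ⟨h2, _⟩ | ⟨h2, _⟩
        · rw [h2] at hu1; linarith
        · rw [h2] at hu1
          have : u = 0 := by linarith
          rw [this] at h' ⊢
          linarith
      · linarith
  rcases habs with he | he
  · left; intro u hu; have := main 1 he (Or.inl rfl) u hu; linarith
  · right; intro u hu; have := main (-1) he (Or.inr rfl) u hu; linarith

section
variable {E : Type*} [NormedAddCommGroup E] [NormedSpace ℝ E]

set_option maxHeartbeats 1600000 in
lemma geo_struct (Ω : Set E) (hbd : Bornology.IsBounded Ω) (hop : IsOpen Ω)
    (hconv : Convex ℝ Ω) (d : E → E → ℝ)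
    (hd0 : ∀ x ∈ Ω, d x x = 0)
    (hd : ∀ x ∈ Ω, ∀ y ∈ Ω, x ≠ y → ∀ a ∈ frontier Ω, ∀ b ∈ frontier Ω,
      (∃ s > (0 : ℝ), a = x + s • (x - y)) → (∃ t > (0 : ℝ), b = y + t • (y - x)) →
      d x y = (1 / 2) * Real.log ((‖y - a‖ * ‖x - b‖) / (‖x - a‖ * ‖y - b‖)))
    (c : ℝ → E)
    (hcΩ : ∀ u ∈ Set.Ici (0:ℝ), c u ∈ Ω)
    (hline : ∃ p q : E, ∀ u ∈ Set.Ici (0:ℝ), ∃ r : ℝ, c u = p + r • q)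
    (hgeo : ∀ u ∈ Set.Ici (0:ℝ), ∀ u' ∈ Set.Ici (0:ℝ), d (c u) (c u') = |u - u'|)
    (ξ : E) (hξ : ξ ∈ frontier Ω) (hlim : Tendsto c atTop (nhds ξ))
    {s t : ℝ} (hs : 0 ≤ s) (hst : s < t) :
    ∃ la sg : ℝ, 0 < la ∧ la < 1 ∧ 0 < sg ∧
      c t = c s + la • (ξ - c s) ∧ (c s + sg • (c s - ξ) ∈ frontier Ω) ∧
      la + sg = Real.exp (2*(t-s)) * (sg * (1 - la)) := by
  obtain ⟨p, q, hpq⟩ := hline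
  choose! ρ hρ using hpq
  have ht : (0:ℝ) ≤ t := le_trans hs (le_of_lt hst)
  -- q ≠ 0
  have hq : q ≠ 0 := by
    intro h0
    have h01 : d (c 0) (c 1) = 1 := by simpa using hgeo 0 (Set.mem_Ici.mpr le_rfl) 1 (by norm_num)
    have hc0 : c 0 = p := by rw [hρ 0 (Set.mem_Ici.mpr le_rfl), h0, smul_zero, add_zero]
    have hc1 : c 1 = p := by rw [hρ 1 (by norm_num), h0, smul_zero, add_zero]
    rw [hc0, hc1, hd0 p (hc0 ▸ hcΩ 0 (Set.mem_Ici.mpr le_rfl))] at h01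
    norm_num at h01
  have hnq : (0:ℝ) < ‖q‖ := norm_pos_iff.mpr hq
  -- coordinate along the line, centered at c s
  obtain ⟨r, hr⟩ : ∃ r : ℝ → ℝ, r = fun u => ρ u - ρ s := ⟨_, rfl⟩
  have hcu : ∀ u ∈ Set.Ici (0:ℝ), c u = c s + r u • q := by
    intro u hu
    rw [hρ u hu, hρ s hs, hr]
    simp only
    module
  have hrs : r s = 0 := by simp [hr]
  -- chord data forward and backward
  have hcs : c s ∈ Ω := hcΩ s hs
  obtain ⟨ep, heppos, hfrp, hintp, houtp, hubp, huniqp⟩ := chordal Ω hbd hop hconv hcs hq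
  obtain ⟨em, hempos, hfrm, hintm, houtm, hubm, huniqm⟩ :=
    chordal Ω hbd hop hconv hcs (neg_ne_zero.mpr hq)
  -- in-chord bounds
  have hrup : ∀ u ∈ Set.Ici (0:ℝ), r u < ep := by
    intro u hu
    by_contra hcon
    push_neg at hcon
    rcases eq_or_lt_of_le hcon with heq | hlt
    · have : c u ∈ frontier Ω := by rw [hcu u hu, ← heq]; exact hfrp
      rw [hop.frontier_eq] at this
      exact this.2 (hcΩ u hu)
    · exact houtp (r u) hlt (by rw [← hcu u hu]; exact subset_closure (hcΩ u hu))
  have hrum : ∀ u ∈ Set.Ici (0:ℝ), -em < r u := by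
    intro u hu
    by_contra hcon
    push_neg at hcon
    have hcon' : em ≤ -(r u) := by linarith
    rcases eq_or_lt_of_le hcon' with heq | hlt
    · have hcc : c u = c s + em • (-q) := by
        rw [hcu u hu, heq]; module
      have : c u ∈ frontier Ω := by rw [hcc]; exact hfrm
      rw [hop.frontier_eq] at this
      exact this.2 (hcΩ u hu)
    · refine houtm (-(r u)) hlt ?_
      have hcc : c s + -(r u) • (-q) = c u := by rw [hcu u hu]; module
      rw [hcc]
      exact subset_closure (hcΩ u hu)
  -- the logarithmic coordinate
  obtain ⟨F, hF⟩ : ∃ F : ℝ → ℝ, F = fun w => Real.log (w + em) - Real.log (ep - w) := ⟨_, rfl⟩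
  -- distance formula along the geodesic line
  have hdist : ∀ u ∈ Set.Ici (0:ℝ), ∀ u' ∈ Set.Ici (0:ℝ), r u < r u' →
      d (c u) (c u') = 1/2 * (F (r u') - F (r u)) := by
    intro u hu u' hu' hlt
    have hΔ : (0:ℝ) < r u' - r u := by linarith
    have hΔ' : r u' - r u ≠ 0 := ne_of_gt hΔ
    have hA : (0:ℝ) < (r u + em) / (r u' - r u) := by
      apply div_pos _ hΔ
      have := hrum u hu; linarith
    have hB : (0:ℝ) < (ep - r u') / (r u' - r u) := by
      apply div_pos _ hΔ
      have := hrup u' hu'; linarith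
    have hcne : c u ≠ c u' := by
      intro hcc
      have : r u • q = r u' • q := by
        have h1 := hcu u hu; have h2 := hcu u' hu'
        rw [hcc] at h1
        rw [h2] at h1
        exact (add_right_injective _ h1).symm
      have := smul_left_injective ℝ hq this
      linarith
    have ha : c u + ((r u + em) / (r u' - r u)) • (c u - c u') ∈ frontier Ω := by
      have : c u + ((r u + em) / (r u' - r u)) • (c u - c u') = c s + em • (-q) := by
        rw [hcu u hu, hcu u' hu']
        match_scalars <;> field_simp <;> try ring
      rw [this]; exact hfrm
    have hb : c u' + ((ep - r u') / (r u' - r u)) • (c u' - c u) ∈ frontier Ω := by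
      have : c u' + ((ep - r u') / (r u' - r u)) • (c u' - c u) = c s + ep • q := by
        rw [hcu u hu, hcu u' hu']
        match_scalars <;> field_simp <;> try ring
      rw [this]; exact hfrp
    rw [hform Ω d hd (hcΩ u hu) (hcΩ u' hu') hcne hA hB ha hb]
    have hrum' := hrum u hu
    have hrum'' := hrum u' hu'
    have hrup' := hrup u hu
    have hrup'' := hrup u' hu'
    have harg : (1 + (r u + em) / (r u' - r u)) * (1 + (ep - r u') / (r u' - r u))
        / ((r u + em) / (r u' - r u) * ((ep - r u') / (r u' - r u)))
        = ((r u' + em) * (ep - r u)) / ((r u + em) * (ep - r u')) := by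
      field_simp
      ring
    rw [harg, hF]
    have h1 : (0:ℝ) < r u' + em := by linarith
    have h2 : (0:ℝ) < ep - r u := by linarith
    have h3 : (0:ℝ) < r u + em := by linarith
    have h4 : (0:ℝ) < ep - r u' := by linarith
    rw [Real.log_div (by positivity) (by positivity), Real.log_mul (ne_of_gt h1) (ne_of_gt h2),
      Real.log_mul (ne_of_gt h3) (ne_of_gt h4)]
    simp only
    ring
  -- the rescaled coordinate is a ray isometry
  obtain ⟨G, hG⟩ : ∃ G : ℝ → ℝ, G = fun u => F (r u) / 2 := ⟨_, rfl⟩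
  have hiso : ∀ u ≥ (0:ℝ), ∀ u' ≥ (0:ℝ), |G u - G u'| = |u - u'| := by
    intro u hu u' hu'
    rcases lt_trichotomy (r u) (r u') with hlt | heq | hgt
    · have h1 := hdist u hu u' hu' hlt
      have h2 := hgeo u hu u' hu'
      have h3 : G u' - G u = |u - u'| := by rw [hG]; simp only; linarith
      rw [abs_sub_comm, h3, abs_abs]
    · have hcc : c u = c u' := by rw [hcu u hu, hcu u' hu', heq]
      have h2 := hgeo u hu u' hu'
      rw [hcc, hd0 _ (hcΩ u' hu')] at h2
      have huu : u = u' := by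
        have := abs_eq_zero.mp h2.symm
        linarith
      rw [huu, hG]
      simp
    · have h1 := hdist u' hu' u hu hgt
      have h2 := hgeo u' hu' u hu
      have h3 : G u - G u' = |u' - u| := by rw [hG]; simp only; linarith
      rw [h3, abs_abs, abs_sub_comm]
  -- linear structure
  have hcases := ray_isom hiso
  -- limit coordinate
  obtain ⟨l, hlnorm, hlq⟩ := exists_dual_vector ℝ q hnq.ne'
  have hrlim : Tendsto (fun u => r u) atTop (nhds ((l ξ - l (c s)) / ‖q‖)) := by
    have hev : ∀ᶠ u in atTop, (l (c u) - l (c s)) / ‖q‖ = r u := by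
      filter_upwards [eventually_ge_atTop (0:ℝ)] with u hu
      rw [hcu u hu]
      simp only [map_add, ContinuousLinearMap.map_smul]
      rw [hlq]
      field_simp
      simp only [RCLike.ofReal_real_eq_id, id_eq, smul_eq_mul]; ring
    refine Tendsto.congr' hev ?_
    exact (((l.continuous.tendsto ξ).comp hlim).sub_const _).div_const _
  set rstar := (l ξ - l (c s)) / ‖q‖ with hrstar
  have hξeq : ξ = c s + rstar • q := by
    have h1 : Tendsto (fun u => c s + r u • q) atTop (nhds (c s + rstar • q)) :=
      tendsto_const_nhds.add (hrlim.smul_const q)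
    have h2 : Tendsto (fun u => c s + r u • q) atTop (nhds ξ) := by
      refine Tendsto.congr' ?_ hlim
      filter_upwards [eventually_ge_atTop (0:ℝ)] with u hu
      exact hcu u hu
    exact tendsto_nhds_unique h2 h1
  have hrstar_le : rstar ≤ ep := by
    refine le_of_tendsto hrlim ?_
    filter_upwards [eventually_ge_atTop (0:ℝ)] with u hu
    exact le_of_lt (hrup u hu)
  have hrstar_ge : -em ≤ rstar := by
    refine ge_of_tendsto hrlim ?_
    filter_upwards [eventually_ge_atTop (0:ℝ)] with u hu
    exact le_of_lt (hrum u hu)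
  rcases hcases with hplus | hminus
  · -- forward orientation: ξ is the forward endpoint
    have hrseq : rstar = ep := by
      rcases eq_or_lt_of_le hrstar_le with h | h
      · exact h
      · exfalso
        obtain ⟨w, hw1, hw2⟩ : ∃ w, rstar < w ∧ w < ep :=
          ⟨(rstar + ep)/2, by linarith, by linarith⟩
        have hev := (hrlim.eventually_lt_const hw1).and (eventually_ge_atTop (0:ℝ))
        obtain ⟨U, hU⟩ := eventually_atTop.mp hev
        obtain ⟨M, hM⟩ : ∃ M, M = Real.log (ep + em) - Real.log (ep - w) := ⟨_, rfl⟩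
        obtain ⟨u, huU, hu0, hubig⟩ : ∃ u, U ≤ u ∧ 0 ≤ u ∧ M/2 - G 0 + 1 ≤ u :=
          ⟨max U (max 0 (M/2 - G 0 + 1)), le_max_left _ _,
            le_trans (le_max_left _ _) (le_max_right U _),
            le_trans (le_max_right _ _) (le_max_right U _)⟩
        obtain ⟨hru_w, hu0'⟩ := hU u huU
        have hrum' := hrum u hu0'
        have hrup' := hrup u hu0'
        have hFu : F (r u) ≤ M := by
          have e1 : Real.log (r u + em) ≤ Real.log (ep + em) :=
            Real.log_le_log (by linarith) (by linarith)
          have e2 : Real.log (ep - w) ≤ Real.log (ep - r u) :=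
            Real.log_le_log (by linarith) (by linarith)
          rw [hF, hM]; simp only; linarith
        have hGu : G u = G 0 + u := hplus u hu0
        have hGF : G u = F (r u) / 2 := by rw [hG]
        linarith only [hubig, hGu, hGF, hFu]
    have hξq : ξ - c s = ep • q := by rw [hξeq, hrseq]; module
    have hGt : G t = G 0 + t := hplus t ht
    have hGs : G s = G 0 + s := hplus s hs
    have hFts : F (r t) - F 0 = 2*(t - s) := by
      have h1 : G t = F (r t) / 2 := by rw [hG]
      have h2 : G s = F (r s) / 2 := by rw [hG]
      rw [hrs] at h2
      linarith only [hGt, hGs, h1, h2]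
    have hrumt := hrum t ht
    have hrupt := hrup t ht
    have hrt0 : 0 < r t := by
      by_contra hcon
      push_neg at hcon
      have e1 : Real.log (r t + em) ≤ Real.log em :=
        Real.log_le_log (by linarith) (by linarith)
      have e2 : Real.log ep ≤ Real.log (ep - r t) :=
        Real.log_le_log (by linarith) (by linarith)
      have : F (r t) ≤ F 0 := by
        rw [hF]; simp only [zero_add, sub_zero]; linarith only [e1, e2]
      linarith only [hFts, this, hst]
    refine ⟨r t / ep, em / ep, by positivity, ?_, by positivity, ?_, ?_, ?_⟩
    · rw [div_lt_one heppos]; exact hrupt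
    · rw [hcu t ht, hξq, smul_smul]
      have : r t / ep * ep = r t := by field_simp
      rw [this]
    · have hfr2 : c s + (em / ep) • (c s - ξ) = c s + em • (-q) := by
        have hsub : c s - ξ = -(ep • q) := by rw [← neg_sub, hξq]
        rw [hsub]
        match_scalars <;> (field_simp; try ring)
      rw [hfr2]; exact hfrm
    · have hXpos : (0:ℝ) < ((r t + em) * ep) / (em * (ep - r t)) := by
        apply div_pos (by nlinarith) (by nlinarith)
      have hlogX : Real.log (((r t + em) * ep) / (em * (ep - r t))) = F (r t) - F 0 := by
        rw [Real.log_div (ne_of_gt (mul_pos (by linarith only [hrumt]) heppos))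
            (ne_of_gt (mul_pos hempos (by linarith only [hrupt]))),
          Real.log_mul (ne_of_gt (by linarith only [hrumt])) (ne_of_gt heppos),
          Real.log_mul (ne_of_gt hempos) (ne_of_gt (by linarith only [hrupt])), hF]
        simp only [zero_add, sub_zero]
        ring
      have hX : ((r t + em) * ep) / (em * (ep - r t)) = Real.exp (2*(t-s)) := by
        rw [← Real.exp_log hXpos, hlogX, hFts]
      have hne1 : ep ≠ 0 := ne_of_gt heppos
      have hne2 : em ≠ 0 := ne_of_gt hempos
      have hne3 : ep - r t ≠ 0 := ne_of_gt (by linarith only [hrupt])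
      have hne4 : r t + em ≠ 0 := ne_of_gt (by linarith only [hrumt])
      rw [← hX]
      field_simp
  · -- backward orientation: ξ is the backward endpoint
    have hrseq : rstar = -em := by
      rcases eq_or_lt_of_le hrstar_ge with h | h
      · exact h.symm
      · exfalso
        obtain ⟨w, hw1, hw2⟩ : ∃ w, w < rstar ∧ -em < w :=
          ⟨(rstar + -em)/2, by linarith, by linarith⟩
        have hev := (hrlim.eventually_const_lt hw1).and (eventually_ge_atTop (0:ℝ))
        obtain ⟨U, hU⟩ := eventually_atTop.mp hev
        obtain ⟨M, hM⟩ : ∃ M, M = Real.log (w + em) - Real.log (ep + em) := ⟨_, rfl⟩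
        obtain ⟨u, huU, hu0, hubig⟩ : ∃ u, U ≤ u ∧ 0 ≤ u ∧ G 0 - M/2 + 1 ≤ u :=
          ⟨max U (max 0 (G 0 - M/2 + 1)), le_max_left _ _,
            le_trans (le_max_left _ _) (le_max_right U _),
            le_trans (le_max_right _ _) (le_max_right U _)⟩
        obtain ⟨hru_w, hu0'⟩ := hU u huU
        have hrum' := hrum u hu0'
        have hrup' := hrup u hu0'
        have hFu : M ≤ F (r u) := by
          have e1 : Real.log (w + em) ≤ Real.log (r u + em) :=
            Real.log_le_log (by linarith) (by linarith)
          have e2 : Real.log (ep - r u) ≤ Real.log (ep + em) :=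
            Real.log_le_log (by linarith) (by linarith)
          rw [hF, hM]; simp only; linarith
        have hGu : G u = G 0 - u := hminus u hu0
        have hGF : G u = F (r u) / 2 := by rw [hG]
        linarith only [hubig, hGu, hGF, hFu]
    have hξq : ξ - c s = -(em • q) := by rw [hξeq, hrseq]; module
    have hGt : G t = G 0 - t := hminus t ht
    have hGs : G s = G 0 - s := hminus s hs
    have hFts : F (r t) - F 0 = -(2*(t - s)) := by
      have h1 : G t = F (r t) / 2 := by rw [hG]
      have h2 : G s = F (r s) / 2 := by rw [hG]
      rw [hrs] at h2
      linarith only [hGt, hGs, h1, h2]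
    have hrumt := hrum t ht
    have hrupt := hrup t ht
    have hrt0 : r t < 0 := by
      by_contra hcon
      push_neg at hcon
      have e1 : Real.log em ≤ Real.log (r t + em) :=
        Real.log_le_log (by linarith) (by linarith)
      have e2 : Real.log (ep - r t) ≤ Real.log ep :=
        Real.log_le_log (by linarith) (by linarith)
      have : F 0 ≤ F (r t) := by
        rw [hF]; simp only [zero_add, sub_zero]; linarith only [e1, e2]
      linarith only [hFts, this, hst]
    refine ⟨-(r t) / em, ep / em, div_pos (by linarith only [hrt0]) hempos,
      ?_, by positivity, ?_, ?_, ?_⟩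
    · rw [div_lt_one hempos]; linarith
    · rw [hcu t ht, hξq, smul_neg, smul_smul]
      have : -(r t) / em * em = -(r t) := by field_simp
      rw [this, neg_smul, neg_neg]
    · have hfr2 : c s + (ep / em) • (c s - ξ) = c s + ep • q := by
        have hsub : c s - ξ = em • q := by
          rw [← neg_sub, hξq, neg_neg]
        rw [hsub]
        match_scalars <;> (field_simp; try ring)
      rw [hfr2]; exact hfrp
    · have hXpos : (0:ℝ) < (em * (ep - r t)) / ((r t + em) * ep) := by
        apply div_pos (by nlinarith) (by nlinarith)
      have hlogX : Real.log ((em * (ep - r t)) / ((r t + em) * ep)) = F 0 - F (r t) := by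
        rw [Real.log_div (ne_of_gt (mul_pos hempos (by linarith only [hrupt])))
            (ne_of_gt (mul_pos (by linarith only [hrumt]) heppos)),
          Real.log_mul (ne_of_gt hempos) (ne_of_gt (by linarith only [hrupt])),
          Real.log_mul (ne_of_gt (by linarith only [hrumt])) (ne_of_gt heppos), hF]
        simp only [zero_add, sub_zero]
        ring
      have hX : (em * (ep - r t)) / ((r t + em) * ep) = Real.exp (2*(t-s)) := by
        rw [← Real.exp_log hXpos, hlogX]
        congr 1
        linarith only [hFts]
      have hne1 : ep ≠ 0 := ne_of_gt heppos
      have hne2 : em ≠ 0 := ne_of_gt hempos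
      have hne3 : ep - r t ≠ 0 := ne_of_gt (by linarith only [hrupt])
      have hne4 : r t + em ≠ 0 := ne_of_gt (by linarith only [hrumt])
      rw [← hX]
      field_simp
      ring
end

/-- Proposition 5.1(1): the Hilbert distance between two unit-speed straight geodesics
`c₁, c₂ : [0, ∞) → Ω` converging to the same boundary point `ξ` is non-increasing. -/
theorem prop_5_1_1 {E : Type*} [NormedAddCommGroup E] [NormedSpace ℝ E]
    [FiniteDimensional ℝ E]
    (Ω : Set E) (hne : Ω.Nonempty) (hbd : Bornology.IsBounded Ω)
    (hop : IsOpen Ω) (hconv : Convex ℝ Ω)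
    (d : E → E → ℝ)
    (hd0 : ∀ x ∈ Ω, d x x = 0)
    (hd : ∀ x ∈ Ω, ∀ y ∈ Ω, x ≠ y → ∀ a ∈ frontier Ω, ∀ b ∈ frontier Ω,
      (∃ s > (0 : ℝ), a = x + s • (x - y)) → (∃ t > (0 : ℝ), b = y + t • (y - x)) →
      d x y = (1 / 2) * Real.log ((‖y - a‖ * ‖x - b‖) / (‖x - a‖ * ‖y - b‖)))
    (c₁ c₂ : ℝ → E)
    (hc₁Ω : ∀ t ∈ Set.Ici (0 : ℝ), c₁ t ∈ Ω)
    (hc₂Ω : ∀ t ∈ Set.Ici (0 : ℝ), c₂ t ∈ Ω)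
    (hline₁ : ∃ p q : E, ∀ t ∈ Set.Ici (0 : ℝ), ∃ r : ℝ, c₁ t = p + r • q)
    (hline₂ : ∃ p q : E, ∀ t ∈ Set.Ici (0 : ℝ), ∃ r : ℝ, c₂ t = p + r • q)
    (hgeo₁ : ∀ s ∈ Set.Ici (0 : ℝ), ∀ t ∈ Set.Ici (0 : ℝ), d (c₁ s) (c₁ t) = |s - t|)
    (hgeo₂ : ∀ s ∈ Set.Ici (0 : ℝ), ∀ t ∈ Set.Ici (0 : ℝ), d (c₂ s) (c₂ t) = |s - t|)
    (ξ : E) (hξ : ξ ∈ frontier Ω)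
    (hlim₁ : Tendsto c₁ atTop (nhds ξ)) (hlim₂ : Tendsto c₂ atTop (nhds ξ)) :
    ∀ s t : ℝ, 0 ≤ s → s ≤ t → d (c₁ t) (c₂ t) ≤ d (c₁ s) (c₂ s) := by
  intro s t hs hst
  rcases eq_or_lt_of_le hst with rfl | hlt
  · exact le_refl _
  · obtain ⟨la, sg, hla0, hla1, hsg, hct1, hfr1, hrel1⟩ :=
      geo_struct Ω hbd hop hconv d hd0 hd c₁ hc₁Ω hline₁ hgeo₁ ξ hξ hlim₁ hs hlt
    obtain ⟨mu, ta, hmu0, hmu1, hta, hct2, hfr2, hrel2⟩ :=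
      geo_struct Ω hbd hop hconv d hd0 hd c₂ hc₂Ω hline₂ hgeo₂ ξ hξ hlim₂ hs hlt
    have hK : 1 < Real.exp (2*(t-s)) := by
      have := Real.exp_lt_exp.mpr (show (0:ℝ) < 2*(t-s) by linarith)
      rwa [Real.exp_zero] at this
    have hmain := core Ω hbd hop hconv d hd0 hd
      (hc₁Ω s (Set.mem_Ici.mpr hs)) (hc₂Ω s (Set.mem_Ici.mpr hs)) hξ
      hla0 hla1 hmu0 hmu1 hsg hta hK hfr1 hfr2 hrel1 hrel2
    rw [hct1, hct2]
    exact hmain
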